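/- arXiv:1708.02332 — 2 statements merged into one kernel-verified Lean document; each statement's English description precedes it below -/
import Mathlib

section
/- For pairwise distinct indices i, j, k ∈ {1,…,N}, the smallest Lie subalgebra of the N×N real matrices (under the commutator) containing A_{ij} and A_{jk} equals the linear span of the four matrices A_{ij}, A_{jk}, A_{ik}, and B_{ijk}. -/
/-- `A i j = E i j + E j i - E i i - E j j`. -/
noncomputable def Amat (N : ℕ) (i j : Fin N) : Matrix (Fin N) (Fin N) ℝ :=
  Matrix.single i j 1 + Matrix.single j i 1 -
    Matrix.single i i 1 - Matrix.single j j 1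

/-- `B i j k = (E i k - E k i) - (E i j - E j i) - (E j k - E k j)`. -/
noncomputable def Bmat (N : ℕ) (i j k : Fin N) : Matrix (Fin N) (Fin N) ℝ :=
  (Matrix.single i k 1 - Matrix.single k i 1) -
    (Matrix.single i j 1 - Matrix.single j i 1) -
    (Matrix.single j k 1 - Matrix.single k j 1)

attribute [local instance 100] LieRing.ofAssociativeRing

/-- The smallest Lie subalgebra (linear subspace closed under the commutator)
of the `N × N` real matrices containing a set `S`. -/
noncomputable def lieGen (N : ℕ) (S : Set (Matrix (Fin N) (Fin N) ℝ)) :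
    LieSubalgebra ℝ (Matrix (Fin N) (Fin N) ℝ) :=
  LieSubalgebra.lieSpan ℝ (Matrix (Fin N) (Fin N) ℝ) S

lemma mulE {N : ℕ} (i j k l : Fin N) :
    Matrix.single i j (1:ℝ) * Matrix.single k l 1 =
      if j = k then Matrix.single i l 1 else 0 := by
  split_ifs with h
  · subst h; simpa using Matrix.single_mul_single_same (i := i) (j := j) (c := (1:ℝ)) l 1
  · exact Matrix.single_mul_single_of_ne (c := (1:ℝ)) i j k h 1

section Brackets

variable {N : ℕ} {i j k : Fin N}

variable (hij : i ≠ j) (hik : i ≠ k) (hjk : j ≠ k)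
include hij hik hjk

lemma lie12 : ⁅Amat N i j, Amat N j k⁆ = Bmat N i j k := by
  simp only [Ring.lie_def, Amat, Bmat, sub_mul, add_mul, mul_sub, mul_add, mulE]
  simp only [if_pos rfl, if_true, if_neg hij, if_neg hij.symm, if_neg hik, if_neg hik.symm,
    if_neg hjk, if_neg hjk.symm]
  abel

lemma lie13 : ⁅Amat N i j, Amat N i k⁆ = -Bmat N i j k := by
  simp only [Ring.lie_def, Amat, Bmat, sub_mul, add_mul, mul_sub, mul_add, mulE]
  simp only [if_pos rfl, if_true, if_neg hij, if_neg hij.symm, if_neg hik, if_neg hik.symm,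
    if_neg hjk, if_neg hjk.symm]
  simp only [neg_sub]
  abel

lemma lie23 : ⁅Amat N j k, Amat N i k⁆ = Bmat N i j k := by
  simp only [Ring.lie_def, Amat, Bmat, sub_mul, add_mul, mul_sub, mul_add, mulE]
  simp only [if_pos rfl, if_true, if_neg hij, if_neg hij.symm, if_neg hik, if_neg hik.symm,
    if_neg hjk, if_neg hjk.symm]
  abel

lemma lie1B : ⁅Amat N i j, Bmat N i j k⁆ = (2:ℝ) • Amat N j k - (2:ℝ) • Amat N i k := by
  simp only [Ring.lie_def, Amat, Bmat, sub_mul, add_mul, mul_sub, mul_add, mulE, smul_sub,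
    smul_add]
  simp only [if_pos rfl, if_true, if_neg hij, if_neg hij.symm, if_neg hik, if_neg hik.symm,
    if_neg hjk, if_neg hjk.symm, two_smul]
  abel

lemma lie2B : ⁅Amat N j k, Bmat N i j k⁆ = (2:ℝ) • Amat N i k - (2:ℝ) • Amat N i j := by
  simp only [Ring.lie_def, Amat, Bmat, sub_mul, add_mul, mul_sub, mul_add, mulE, smul_sub,
    smul_add]
  simp only [if_pos rfl, if_true, if_neg hij, if_neg hij.symm, if_neg hik, if_neg hik.symm,
    if_neg hjk, if_neg hjk.symm, two_smul]
  abel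

lemma lie3B : ⁅Amat N i k, Bmat N i j k⁆ = (2:ℝ) • Amat N i j - (2:ℝ) • Amat N j k := by
  simp only [Ring.lie_def, Amat, Bmat, sub_mul, add_mul, mul_sub, mul_add, mulE, smul_sub,
    smul_add]
  simp only [if_pos rfl, if_true, if_neg hij, if_neg hij.symm, if_neg hik, if_neg hik.symm,
    if_neg hjk, if_neg hjk.symm, two_smul]
  abel

end Brackets

theorem lieGen_pair_eq_span (N : ℕ) (i j k : Fin N)
    (hij : i ≠ j) (hik : i ≠ k) (hjk : j ≠ k) :
    (lieGen N {Amat N i j, Amat N j k} : Set (Matrix (Fin N) (Fin N) ℝ)) =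
      (Submodule.span ℝ
        ({Amat N i j, Amat N j k, Amat N i k, Bmat N i j k} :
          Set (Matrix (Fin N) (Fin N) ℝ)) : Set (Matrix (Fin N) (Fin N) ℝ)) := by
  set S4 : Set (Matrix (Fin N) (Fin N) ℝ) :=
    {Amat N i j, Amat N j k, Amat N i k, Bmat N i j k} with hS4
  set p : Submodule ℝ (Matrix (Fin N) (Fin N) ℝ) := Submodule.span ℝ S4 with hp
  have m1 : Amat N i j ∈ p := Submodule.subset_span (by simp [hS4])
  have m2 : Amat N j k ∈ p := Submodule.subset_span (by simp [hS4])
  have m3 : Amat N i k ∈ p := Submodule.subset_span (by simp [hS4])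
  have mB : Bmat N i j k ∈ p := Submodule.subset_span (by simp [hS4])
  -- brackets of generators are in p
  have key : ∀ x ∈ S4, ∀ y ∈ S4, ⁅x, y⁆ ∈ p := by
    have b12 := lie12 hij hik hjk
    have b13 := lie13 hij hik hjk
    have b23 := lie23 hij hik hjk
    have b1B := lie1B hij hik hjk
    have b2B := lie2B hij hik hjk
    have b3B := lie3B hij hik hjk
    rintro x (rfl | rfl | rfl | rfl) y (rfl | rfl | rfl | rfl) <;>
      first
      | (rw [lie_self]; exact p.zero_mem)
      | (rw [b12]; exact mB)
      | (rw [b13]; exact p.neg_mem mB)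
      | (rw [b23]; exact mB)
      | (rw [b1B]; exact p.sub_mem (p.smul_mem _ m2) (p.smul_mem _ m3))
      | (rw [b2B]; exact p.sub_mem (p.smul_mem _ m3) (p.smul_mem _ m1))
      | (rw [b3B]; exact p.sub_mem (p.smul_mem _ m1) (p.smul_mem _ m2))
      | (rw [← lie_skew, b12]; exact p.neg_mem mB)
      | (rw [← lie_skew, b13]; exact p.neg_mem (p.neg_mem mB))
      | (rw [← lie_skew, b23]; exact p.neg_mem mB)
      | (rw [← lie_skew, b1B]; exact p.neg_mem (p.sub_mem (p.smul_mem _ m2) (p.smul_mem _ m3)))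
      | (rw [← lie_skew, b2B]; exact p.neg_mem (p.sub_mem (p.smul_mem _ m3) (p.smul_mem _ m1)))
      | (rw [← lie_skew, b3B]; exact p.neg_mem (p.sub_mem (p.smul_mem _ m1) (p.smul_mem _ m2)))
  have closed : ∀ {x y : Matrix (Fin N) (Fin N) ℝ}, x ∈ p → y ∈ p → ⁅x, y⁆ ∈ p := by
    intro x y hx hy
    induction hx, hy using Submodule.span_induction₂ with
    | mem_mem a b ha hb => exact key a ha b hb
    | zero_left b hb => simpa using p.zero_mem
    | zero_right a ha => simpa using p.zero_mem
    | add_left a b c _ _ _ h1 h2 => rw [add_lie]; exact p.add_mem h1 h2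
    | add_right a b c _ _ _ h1 h2 => rw [lie_add]; exact p.add_mem h1 h2
    | smul_left r a b _ _ h => rw [smul_lie]; exact p.smul_mem _ h
    | smul_right r a b _ _ h => rw [lie_smul]; exact p.smul_mem _ h
  let K : LieSubalgebra ℝ (Matrix (Fin N) (Fin N) ℝ) :=
    { toSubmodule := p
      lie_mem' := fun hx hy => closed hx hy }
  have hle : lieGen N {Amat N i j, Amat N j k} ≤ K := by
    rw [lieGen, LieSubalgebra.lieSpan_le]
    rintro x (rfl | rfl)
    · exact m1
    · exact m2
  have hge : p ≤ (lieGen N {Amat N i j, Amat N j k}).toSubmodule := by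
    rw [hp, Submodule.span_le]
    have h1' : Amat N i j ∈ lieGen N {Amat N i j, Amat N j k} :=
      LieSubalgebra.subset_lieSpan (by simp)
    have h2' : Amat N j k ∈ lieGen N {Amat N i j, Amat N j k} :=
      LieSubalgebra.subset_lieSpan (by simp)
    have hB' : Bmat N i j k ∈ lieGen N {Amat N i j, Amat N j k} := by
      rw [← lie12 hij hik hjk]
      exact (lieGen N _).lie_mem h1' h2'
    have h3' : Amat N i k ∈ lieGen N {Amat N i j, Amat N j k} := by
      have := (lieGen N {Amat N i j, Amat N j k}).smul_mem ((1:ℝ)/2)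
        ((lieGen N _).lie_mem h2' hB')
      have heq : ((1:ℝ)/2) • ⁅Amat N j k, Bmat N i j k⁆ = Amat N i k - Amat N i j := by
        rw [lie2B hij hik hjk, smul_sub, smul_smul, smul_smul]
        norm_num
      rw [heq] at this
      have := (lieGen N {Amat N i j, Amat N j k}).add_mem this h1'
      simpa using this
    rintro x (rfl | rfl | rfl | rfl)
    · exact h1'
    · exact h2'
    · exact h3'
    · exact hB'
  ext x
  simp only [SetLike.mem_coe]
  exact ⟨fun h => hle h, fun h => hge h⟩
end

section
/- Let N ≥ 2 and let E be a set of pairs (i,j) with 1 ≤ i < j ≤ N. Then the Lie subalgebra Lie({A_{ij} : (i,j) ∈ E}) equals the Lie algebra 𝔤 of all real N×N matrices whose row sums and column sums are all zero if and only if the simple graph Γ_E with vertex set {1,…,N} and edge set E is connected. -/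
attribute [local instance 100] LieRing.ofAssociativeRing

/-- The set of real `N × N` matrices all of whose row sums and column sums are zero. -/
def gSet (N : ℕ) : Set (Matrix (Fin N) (Fin N) ℝ) :=
  {M | (∀ i, ∑ j, M i j = 0) ∧ (∀ j, ∑ i, M i j = 0)}

/-- The simple graph on `{1,…,N}` whose edges are the pairs in `E`. -/
def graphOf (N : ℕ) (E : Set (Fin N × Fin N)) : SimpleGraph (Fin N) where
  Adj a b := a ≠ b ∧ ((a, b) ∈ E ∨ (b, a) ∈ E)
  symm := by
    refine ⟨?_⟩
    intro a b h
    exact ⟨h.1.symm, h.2.symm⟩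
  loopless := by
    refine ⟨?_⟩
    intro a h
    exact h.1 rfl

open Matrix

/-! ### Auxiliary definitions and lemmas -/

noncomputable def vv {N : ℕ} (i j : Fin N) : Fin N → ℝ := Pi.single i 1 - Pi.single j 1

lemma vv_apply {N : ℕ} (i j k : Fin N) :
    vv i j k = (if k = i then (1:ℝ) else 0) - (if k = j then 1 else 0) := by
  simp [vv, Pi.single_apply]

lemma vv_swap {N : ℕ} (i j : Fin N) : vv j i = - vv i j := by
  ext k; simp [vv_apply]

lemma vv_dot {N : ℕ} (i j k l : Fin N) :
    vv i j ⬝ᵥ vv k l = ((if i = k then (1:ℝ) else 0) - (if i = l then 1 else 0))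
      - ((if j = k then 1 else 0) - (if j = l then 1 else 0)) := by
  simp only [vv, sub_dotProduct, dotProduct_sub, single_dotProduct, Pi.single_apply, one_mul]
  simp [eq_comm]
  ring

lemma vv_dot_self {N : ℕ} {i j : Fin N} (h : i ≠ j) : vv i j ⬝ᵥ vv i j = 2 := by
  rw [vv_dot]; simp [h, h.symm]; norm_num

lemma mul_vecMulVec {N : ℕ} (x y u w : Fin N → ℝ) :
    vecMulVec x y * vecMulVec u w = (y ⬝ᵥ u) • vecMulVec x w := by
  ext i j
  simp only [mul_apply, vecMulVec_apply, Matrix.smul_apply, smul_eq_mul, dotProduct, Finset.sum_mul]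
  exact Finset.sum_congr rfl fun c _ => by ring

lemma lie_vv {N : ℕ} (x y u w : Fin N → ℝ) :
    ⁅vecMulVec x y, vecMulVec u w⁆
      = (y ⬝ᵥ u) • vecMulVec x w - (w ⬝ᵥ x) • vecMulVec u y := by
  rw [Ring.lie_def, mul_vecMulVec, mul_vecMulVec]

lemma add_vecMulVec {N : ℕ} (x x' y : Fin N → ℝ) :
    vecMulVec (x + x') y = vecMulVec x y + vecMulVec x' y := by
  ext i j; simp [vecMulVec_apply]; ring

lemma vecMulVec_add {N : ℕ} (x y y' : Fin N → ℝ) :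
    vecMulVec x (y + y') = vecMulVec x y + vecMulVec x y' := by
  ext i j; simp [vecMulVec_apply]; ring

lemma neg_vecMulVec {N : ℕ} (x y : Fin N → ℝ) :
    vecMulVec (-x) y = - vecMulVec x y := by
  ext i j; simp [vecMulVec_apply]

lemma vecMulVec_neg {N : ℕ} (x y : Fin N → ℝ) :
    vecMulVec x (-y) = - vecMulVec x y := by
  ext i j; simp [vecMulVec_apply]

lemma zero_vecMulVec {N : ℕ} (y : Fin N → ℝ) : vecMulVec (0 : Fin N → ℝ) y = 0 := by
  ext i j; simp [vecMulVec_apply]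

lemma vecMulVec_zero {N : ℕ} (x : Fin N → ℝ) : vecMulVec x (0 : Fin N → ℝ) = 0 := by
  ext i j; simp [vecMulVec_apply]

lemma vv_self {N : ℕ} (r : Fin N) : vv r r = 0 := by
  ext k; simp [vv]

lemma Amat_eq {N : ℕ} (i j : Fin N) :
    Amat N i j = - vecMulVec (vv i j) (vv i j) := by
  ext a b
  by_cases hai : i = a <;> by_cases haj : j = a <;> by_cases hbi : i = b <;>
    by_cases hbj : j = b <;>
      simp [Amat, vv, Matrix.single, vecMulVec_apply, Pi.single_apply, hai, haj, hbi, hbj,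
        eq_comm] <;> by_cases hab : a = b <;> simp [hab]

lemma row_sum_std {N : ℕ} (a b i : Fin N) :
    ∑ j, Matrix.single a b (1:ℝ) i j = if a = i then 1 else 0 := by
  simp [Matrix.single, ite_and, Finset.sum_ite_eq]

lemma col_sum_std {N : ℕ} (a b j : Fin N) :
    ∑ i, Matrix.single a b (1:ℝ) i j = if b = j then 1 else 0 := by
  simp [Matrix.single, ite_and, Finset.sum_ite_eq]

lemma Amat_mem_gSet {N : ℕ} (i j : Fin N) : Amat N i j ∈ gSet N := by
  constructor <;> intro k <;>
    simp [Amat, Finset.sum_add_distrib, Finset.sum_sub_distrib, row_sum_std, col_sum_std]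

/-! ### `gSet` as a Lie subalgebra -/

lemma row_sum_mul {N : ℕ} (A B : Matrix (Fin N) (Fin N) ℝ)
    (hB : ∀ i, ∑ j, B i j = 0) (i : Fin N) : ∑ j, (A * B) i j = 0 := by
  simp only [mul_apply]
  rw [Finset.sum_comm]
  simp [← Finset.mul_sum, hB]

lemma col_sum_mul {N : ℕ} (A B : Matrix (Fin N) (Fin N) ℝ)
    (hA : ∀ j, ∑ i, A i j = 0) (j : Fin N) : ∑ i, (A * B) i j = 0 := by
  simp only [mul_apply]
  rw [Finset.sum_comm]
  simp [← Finset.sum_mul, hA]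

noncomputable def gLie (N : ℕ) : LieSubalgebra ℝ (Matrix (Fin N) (Fin N) ℝ) where
  carrier := gSet N
  add_mem' := by
    rintro A B ⟨hA1, hA2⟩ ⟨hB1, hB2⟩
    exact ⟨fun i => by simp [Finset.sum_add_distrib, hA1 i, hB1 i],
           fun j => by simp [Finset.sum_add_distrib, hA2 j, hB2 j]⟩
  zero_mem' := ⟨fun i => by simp, fun j => by simp⟩
  smul_mem' := by
    rintro c A ⟨hA1, hA2⟩
    exact ⟨fun i => by simp [← Finset.mul_sum, hA1 i],
           fun j => by simp [← Finset.mul_sum, hA2 j]⟩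
  lie_mem' := by
    rintro A B ⟨hA1, hA2⟩ ⟨hB1, hB2⟩
    rw [Ring.lie_def]
    refine ⟨fun i => ?_, fun j => ?_⟩
    · simp [Finset.sum_sub_distrib, row_sum_mul A B hB1 i, row_sum_mul B A hA1 i]
    · simp [Finset.sum_sub_distrib, col_sum_mul A B hA2 j, col_sum_mul B A hB2 j]

/-! ### The "block" Lie subalgebra for the disconnected case -/

noncomputable def Dalg (N : ℕ) (G : SimpleGraph (Fin N)) :
    LieSubalgebra ℝ (Matrix (Fin N) (Fin N) ℝ) where
  carrier := {M | ∀ a b, ¬ G.Reachable a b → M a b = 0}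
  add_mem' := fun hA hB a b h => by simp [hA a b h, hB a b h]
  zero_mem' := fun a b _ => rfl
  smul_mem' := fun c A hA a b h => by simp [hA a b h]
  lie_mem' := by
    intro A B hA hB a b h
    rw [Ring.lie_def]
    have key : ∀ (X Y : Matrix (Fin N) (Fin N) ℝ),
        (∀ a b, ¬ G.Reachable a b → X a b = 0) → (∀ a b, ¬ G.Reachable a b → Y a b = 0) →
        (X * Y) a b = 0 := by
      intro X Y hX hY
      rw [mul_apply]
      refine Finset.sum_eq_zero fun c _ => ?_
      by_cases hac : G.Reachable a c
      · rw [hY c b fun hcb => h (hac.trans hcb), mul_zero]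
      · rw [hX a c hac, zero_mul]
    simp [Matrix.sub_apply, key A B hA hB, key B A hB hA]

lemma Amat_mem_Dalg {N : ℕ} {E : Set (Fin N × Fin N)} {i j : Fin N}
    (hij : i ≠ j) (hEm : (i, j) ∈ E) : Amat N i j ∈ Dalg N (graphOf N E) := by
  intro a b h
  have hne : a ≠ b := fun hab => h (hab ▸ SimpleGraph.Reachable.refl a)
  have hadj : (graphOf N E).Adj i j := ⟨hij, Or.inl hEm⟩
  have h1 : ¬(i = a ∧ j = b) := fun ⟨h1, h2⟩ => h (h1 ▸ h2 ▸ hadj.reachable)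
  have h2 : ¬(j = a ∧ i = b) := fun ⟨h1, h2⟩ => h (h1 ▸ h2 ▸ hadj.symm.reachable)
  have h3 : ¬(i = a ∧ i = b) := fun ⟨h1, h2⟩ => hne (h1 ▸ h2 ▸ rfl)
  have h4 : ¬(j = a ∧ j = b) := fun ⟨h1, h2⟩ => hne (h1 ▸ h2 ▸ rfl)
  simp [Amat, Matrix.single, h1, h2, h3, h4]

lemma Amat_apply_self {N : ℕ} {a b : Fin N} (h : a ≠ b) : Amat N a b a b = 1 := by
  simp [Amat, Matrix.single, h, h.symm, (by tauto : ¬(b = a ∧ a = b))]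

/-! ### Generation in the connected case -/

section Main
variable {N : ℕ} {E : Set (Fin N × Fin N)}

def Sset (N : ℕ) (E : Set (Fin N × Fin N)) : Set (Matrix (Fin N) (Fin N) ℝ) :=
  {M | ∃ p ∈ E, M = Amat N p.1 p.2}

lemma gen_mem {a b : Fin N} (h : (graphOf N E).Adj a b) :
    vecMulVec (vv a b) (vv a b) ∈ lieGen N (Sset N E) := by
  have hsub : Sset N E ⊆ (lieGen N (Sset N E) : Set _) := LieSubalgebra.subset_lieSpan
  rcases h.2 with hab | hba
  · have hm : Amat N a b ∈ lieGen N (Sset N E) := hsub ⟨(a, b), hab, rfl⟩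
    have := neg_mem hm
    rwa [Amat_eq, neg_neg] at this
  · have hm : Amat N b a ∈ lieGen N (Sset N E) := hsub ⟨(b, a), hba, rfl⟩
    have := neg_mem hm
    rwa [Amat_eq, neg_neg, vv_swap, neg_vecMulVec, vecMulVec_neg, neg_neg] at this

lemma adjshare {a b d : Fin N} (hab : (graphOf N E).Adj a b) (hbd : (graphOf N E).Adj b d) :
    vecMulVec (vv a b) (vv b d) ∈ lieGen N (Sset N E) := by
  by_cases had : a = d
  · subst had
    rw [vv_swap a b, vecMulVec_neg]
    exact neg_mem (gen_mem hab)
  · have hab' : a ≠ b := hab.1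
    have hbd' : b ≠ d := hbd.1
    set x := vv a b with hx_def
    set y := vv b d with hy_def
    have hxy : x ⬝ᵥ y = -1 := by
      rw [hx_def, hy_def, vv_dot]; simp [hab', had, hbd']
    have hyx : y ⬝ᵥ x = -1 := by
      rw [hx_def, hy_def, vv_dot]
      simp [Ne.symm hab', Ne.symm had, Ne.symm hbd', hbd']
    have hyy : y ⬝ᵥ y = 2 := vv_dot_self hbd'
    have hx : vecMulVec x x ∈ lieGen N (Sset N E) := gen_mem hab
    have hy : vecMulVec y y ∈ lieGen N (Sset N E) := gen_mem hbd
    have h1 : ⁅vecMulVec x x, vecMulVec y y⁆ ∈ lieGen N (Sset N E) :=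
      (lieGen N (Sset N E)).lie_mem hx hy
    have e1 : ⁅vecMulVec x x, vecMulVec y y⁆ = (-1:ℝ) • vecMulVec x y + vecMulVec y x := by
      rw [lie_vv, hxy, hyx]; module
    have h2 : ⁅(-1:ℝ) • vecMulVec x y + vecMulVec y x, vecMulVec y y⁆ ∈ lieGen N (Sset N E) :=
      e1 ▸ (lieGen N (Sset N E)).lie_mem h1 hy
    have e2 : ⁅(-1:ℝ) • vecMulVec x y + vecMulVec y x, vecMulVec y y⁆
        = (-2:ℝ) • vecMulVec x y + (-2:ℝ) • vecMulVec y x + (-2:ℝ) • vecMulVec y y := by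
      rw [add_lie, smul_lie, lie_vv, lie_vv, hyy, hyx, hxy]; module
    have final : vecMulVec x y =
        (-(4:ℝ)⁻¹) • ((-2:ℝ) • vecMulVec x y + (-2:ℝ) • vecMulVec y x + (-2:ℝ) • vecMulVec y y)
          - (2⁻¹:ℝ) • vecMulVec y y
          - (2⁻¹:ℝ) • ((-1:ℝ) • vecMulVec x y + vecMulVec y x) := by module
    rw [final]
    exact sub_mem (sub_mem ((lieGen N (Sset N E)).smul_mem _ (e2 ▸ h2))
      ((lieGen N (Sset N E)).smul_mem _ hy)) ((lieGen N (Sset N E)).smul_mem _ (e1 ▸ h1))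

lemma edge_walk {b c : Fin N} (w : (graphOf N E).Walk b c) :
    ∀ a d, (graphOf N E).Adj a b → (graphOf N E).Adj c d →
      vecMulVec (vv a b) (vv c d) ∈ lieGen N (Sset N E) := by
  induction w with
  | nil => exact fun a d hab hcd => adjshare hab hcd
  | @cons b b' c hbb' p ih =>
    intro a d hab hcd
    have h1 : vecMulVec (vv a b) (vv b b') ∈ lieGen N (Sset N E) := adjshare hab hbb'
    have h2 : vecMulVec (vv b b') (vv c d) ∈ lieGen N (Sset N E) := ih b d hbb' hcd
    have hm : vecMulVec (vv b b') (vv b b') ∈ lieGen N (Sset N E) := gen_mem hbb'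
    have hbr : ⁅vecMulVec (vv a b) (vv b b'), vecMulVec (vv b b') (vv c d)⁆
        ∈ lieGen N (Sset N E) := (lieGen N (Sset N E)).lie_mem h1 h2
    have e : ⁅vecMulVec (vv a b) (vv b b'), vecMulVec (vv b b') (vv c d)⁆
        = (2:ℝ) • vecMulVec (vv a b) (vv c d)
          - (vv c d ⬝ᵥ vv a b) • vecMulVec (vv b b') (vv b b') := by
      rw [lie_vv, vv_dot_self hbb'.1]
    have final : vecMulVec (vv a b) (vv c d) =
        (2⁻¹:ℝ) • (⁅vecMulVec (vv a b) (vv b b'), vecMulVec (vv b b') (vv c d)⁆)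
          + (2⁻¹ * (vv c d ⬝ᵥ vv a b) : ℝ) • vecMulVec (vv b b') (vv b b') := by
      rw [e]; module
    rw [final]
    exact add_mem ((lieGen N (Sset N E)).smul_mem _ hbr) ((lieGen N (Sset N E)).smul_mem _ hm)

lemma walk_left {r : Fin N} (y : Fin N → ℝ)
    (hy : ∀ c d, (graphOf N E).Adj c d → vecMulVec (vv c d) y ∈ lieGen N (Sset N E))
    {a : Fin N} (w : (graphOf N E).Walk a r) : vecMulVec (vv a r) y ∈ lieGen N (Sset N E) := by
  induction w with
  | nil => rw [vv_self, zero_vecMulVec]; exact zero_mem _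
  | @cons a m r ham p ih =>
    have : vv a r = vv a m + vv m r := by ext k; simp [vv]
    rw [this, add_vecMulVec]
    exact add_mem (hy a m ham) ih

lemma walk_right {r : Fin N} (x : Fin N → ℝ)
    (hx : ∀ c d, (graphOf N E).Adj c d → vecMulVec x (vv c d) ∈ lieGen N (Sset N E))
    {a : Fin N} (w : (graphOf N E).Walk a r) : vecMulVec x (vv a r) ∈ lieGen N (Sset N E) := by
  induction w with
  | nil => rw [vv_self, vecMulVec_zero]; exact zero_mem _
  | @cons a m r ham p ih =>
    have : vv a r = vv a m + vv m r := by ext k; simp [vv]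
    rw [this, vecMulVec_add]
    exact add_mem (hx a m ham) ih

lemma pair_mem (hconn : (graphOf N E).Connected) (a c r : Fin N) :
    vecMulVec (vv a r) (vv c r) ∈ lieGen N (Sset N E) := by
  obtain ⟨w1⟩ := hconn.preconnected a r
  refine walk_left _ (fun c' d' h' => ?_) w1
  obtain ⟨w2⟩ := hconn.preconnected c r
  refine walk_right _ (fun e f hef => ?_) w2
  obtain ⟨w3⟩ := hconn.preconnected d' e
  exact edge_walk w3 c' f h' hef

end Main

lemma gset_decomp {N : ℕ} (M : Matrix (Fin N) (Fin N) ℝ) (hM : M ∈ gSet N) (r : Fin N) :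
    M = ∑ a, ∑ b, M a b • vecMulVec (vv a r) (vv b r) := by
  ext i j
  simp only [Matrix.sum_apply, Matrix.smul_apply, vecMulVec_apply, smul_eq_mul]
  have inner : ∀ a : Fin N, ∑ b, M a b * vv b r j = M a j := by
    intro a
    simp only [vv_apply, mul_sub]
    rw [Finset.sum_sub_distrib, ← Finset.sum_mul, hM.1 a, zero_mul, sub_zero]
    simp [mul_ite, Finset.sum_ite_eq]
  have h1 : ∀ a : Fin N, ∑ b, M a b * (vv a r i * vv b r j) = vv a r i * M a j := by
    intro a
    rw [← inner a, Finset.mul_sum]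
    exact Finset.sum_congr rfl fun b _ => by ring
  rw [Finset.sum_congr rfl fun a _ => h1 a]
  simp only [vv_apply, sub_mul]
  rw [Finset.sum_sub_distrib, ← Finset.mul_sum]
  have : ∑ a, M a j = 0 := hM.2 j
  rw [this, mul_zero, sub_zero]
  simp [ite_mul, Finset.sum_ite_eq]

theorem lieGen_eq_g_iff_connected (N : ℕ) (hN : 2 ≤ N) (E : Set (Fin N × Fin N))
    (hE : ∀ p ∈ E, p.1 < p.2) :
    (lieGen N {M | ∃ p ∈ E, M = Amat N p.1 p.2} : Set (Matrix (Fin N) (Fin N) ℝ))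
      = gSet N ↔ (graphOf N E).Connected := by
  haveI : Nonempty (Fin N) := ⟨⟨0, by omega⟩⟩
  constructor
  · intro hEq
    rw [SimpleGraph.connected_iff]
    refine ⟨?_, inferInstance⟩
    by_contra h
    unfold SimpleGraph.Preconnected at h
    push_neg at h
    obtain ⟨a, b, hnr⟩ := h
    have haneb : a ≠ b := fun h' => hnr (h' ▸ SimpleGraph.Reachable.refl a)
    have hmem : Amat N a b ∈ (lieGen N (Sset N E) : Set _) := by
      show Amat N a b ∈ (lieGen N {M | ∃ p ∈ E, M = Amat N p.1 p.2} : Set _)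
      rw [hEq]
      exact Amat_mem_gSet a b
    have hle : lieGen N (Sset N E) ≤ Dalg N (graphOf N E) := by
      apply LieSubalgebra.lieSpan_le.mpr
      rintro M ⟨p, hp, rfl⟩
      exact Amat_mem_Dalg (hE p hp).ne hp
    have := hle hmem a b hnr
    rw [Amat_apply_self haneb] at this
    exact one_ne_zero this
  · intro hconn
    apply Set.Subset.antisymm
    · intro M hM
      have hle : lieGen N (Sset N E) ≤ gLie N := by
        apply LieSubalgebra.lieSpan_le.mpr
        rintro M' ⟨p, _, rfl⟩
        exact Amat_mem_gSet p.1 p.2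
      exact hle hM
    · intro M hM
      show M ∈ lieGen N (Sset N E)
      rw [gset_decomp M hM ⟨0, by omega⟩]
      refine sum_mem fun a _ => sum_mem fun b _ => ?_
      exact (lieGen N (Sset N E)).smul_mem _ (pair_mem hconn a b ⟨0, by omega⟩)
end
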